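/- Let (X,E) be a separable type A space and (Y,F) a separable measurable space which is countably separated. If there exists a surjective measurable map f : (X,E) → (Y,F), then F is countably generated. -/

import Mathlib

open MeasureTheory

/-- A map `f : (X,E) → (Y,F)` between measurable spaces is *exactly measurable* if
`f⁻¹(F) = E`. -/
def ExactlyMeasurable {X Y : Type*} [mX : MeasurableSpace X] [mY : MeasurableSpace Y]
    (f : X → Y) : Prop :=
  MeasurableSpace.comap f mY = mX

/-- A countably generated measurable space `(X,E)` is a *type A space* if there is an
exactly measurable map `f : (X,E) → (M,B)` into the Cantor space whose range is an
analytic subset of `M`. -/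
def IsTypeA (X : Type*) [MeasurableSpace X] : Prop :=
  MeasurableSpace.CountablyGenerated X ∧
    ∃ f : X → (ℕ → Bool), ExactlyMeasurable f ∧ MeasureTheory.AnalyticSet (Set.range f)

instance instPolishCantorAux : PolishSpace (ℕ → Bool) :=
  @instPolishSpaceOfSeparableSpaceOfIsCompletelyMetrizableSpace _ _ inferInstance inferInstance

lemma analyticSet_inter_measurableSet {α : Type*} [TopologicalSpace α] [PolishSpace α]
    [MeasurableSpace α] [BorelSpace α] {s t : Set α} (hs : AnalyticSet s)
    (ht : MeasurableSet t) : AnalyticSet (s ∩ t) := by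
  rw [Set.inter_eq_iInter]
  exact AnalyticSet.iInter fun b => by cases b <;> simp [ht.analyticSet, hs]

/-- Let `(X,E)` be a separable type A space and `(Y,F)` a separable measurable space
which is countably separated (some countable family of measurable sets separates the
points of `Y`).  If there exists a surjective measurable map `f : (X,E) → (Y,F)`,
then `F` is countably generated. -/
theorem stmt6 {X Y : Type*} [MeasurableSpace X] [MeasurableSpace Y]
    [MeasurableSingletonClass X] [MeasurableSingletonClass Y]
    (hX : IsTypeA X)
    (hsep : ∃ T : Set (Set Y), T.Countable ∧ (∀ t ∈ T, MeasurableSet t) ∧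
      ∀ y₁ y₂ : Y, y₁ ≠ y₂ →
        ∃ t ∈ T, (y₁ ∈ t ∧ y₂ ∉ t) ∨ (y₂ ∈ t ∧ y₁ ∉ t))
    (f : X → Y) (hf : Measurable f) (hsurj : Function.Surjective f) :
    MeasurableSpace.CountablyGenerated Y := by
  classical
  obtain ⟨-, g, hg, hga⟩ := hX
  obtain ⟨T, hTc, hTm, hTsep⟩ := hsep
  obtain ⟨t, htr⟩ := (hTc.insert ∅).exists_eq_range (Set.insert_nonempty _ _)
  have htm : ∀ n, MeasurableSet (t n) := by
    intro n
    have : t n ∈ insert ∅ T := htr ▸ Set.mem_range_self n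
    rcases this with h | h
    · simp [h]
    · exact hTm _ h
  -- the marker map into Cantor space
  set h : Y → (ℕ → Bool) := fun y n => decide (y ∈ t n) with hh
  have hmeas : Measurable h := by
    refine measurable_pi_lambda _ fun n => ?_
    have : (fun y => decide (y ∈ t n)) ⁻¹' {true} = t n := by ext y; simp
    refine measurable_to_countable' fun b => ?_
    cases b
    · have : (fun y => decide (y ∈ t n)) ⁻¹' {false} = (t n)ᶜ := by ext y; simp
      rw [this]; exact (htm n).compl
    · rw [this]; exact htm n
  have hinj : Function.Injective h := by
    intro y₁ y₂ he
    by_contra hne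
    obtain ⟨s, hsT, hcase⟩ := hTsep y₁ y₂ hne
    obtain ⟨n, hn⟩ : ∃ n, t n = s := by
      have : s ∈ Set.range t := htr ▸ Set.mem_insert_of_mem _ hsT
      exact this
    have := congrFun he n
    simp only [hh, decide_eq_decide] at this
    rw [hn] at this
    rcases hcase with ⟨h1, h2⟩ | ⟨h1, h2⟩ <;> tauto
  -- exact measurability of g, used to Borel-code measurable sets of X
  have hg' : ∀ s : Set X, MeasurableSet s →
      ∃ S : Set (ℕ → Bool), MeasurableSet S ∧ g ⁻¹' S = s := by
    intro s hs
    rw [← hg] at hs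
    exact hs
  -- Borel codes for the coordinates of h ∘ f
  choose C hCm hCe using fun n => hg' (f ⁻¹' t n) (hf (htm n))
  set φ : X → (ℕ → Bool) × (ℕ → Bool) := fun x => (g x, h (f x)) with hφ
  have hrange : Set.range φ = (Prod.fst ⁻¹' Set.range g) ∩
      ⋂ n, {p : (ℕ → Bool) × (ℕ → Bool) | p.2 n = true ↔ p.1 ∈ C n} := by
    ext p
    constructor
    · rintro ⟨x, rfl⟩
      refine ⟨⟨x, rfl⟩, ?_⟩
      simp only [Set.mem_iInter, Set.mem_setOf_eq, hφ]
      intro n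
      have hx : g x ∈ C n ↔ f x ∈ t n := by
        rw [← Set.mem_preimage, hCe n, Set.mem_preimage]
      simp [hh, hx]
    · rintro ⟨⟨x, hx⟩, hp⟩
      simp only [Set.mem_iInter, Set.mem_setOf_eq] at hp
      refine ⟨x, ?_⟩
      have h2 : h (f x) = p.2 := by
        funext n
        have hx' : g x ∈ C n ↔ f x ∈ t n := by
          rw [← Set.mem_preimage, hCe n, Set.mem_preimage]
        have := hp n
        rw [← hx] at this
        simp only [hh]
        rw [Bool.eq_iff_iff]
        simp [this, hx']
      simp only [hφ]
      rw [h2, hx]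
  have hrangeA : AnalyticSet (Set.range φ) := by
    rw [hrange]
    refine analyticSet_inter_measurableSet (hga.preimage continuous_fst) ?_
    refine MeasurableSet.iInter fun n => ?_
    have he : {p : (ℕ → Bool) × (ℕ → Bool) | p.2 n = true ↔ p.1 ∈ C n} =
        ({p : (ℕ → Bool) × (ℕ → Bool) | p.2 n = true} ∩ Prod.fst ⁻¹' C n) ∪
        ({p : (ℕ → Bool) × (ℕ → Bool) | p.2 n = true}ᶜ ∩ (Prod.fst ⁻¹' C n)ᶜ) := by
      ext p
      by_cases hb : p.2 n = true <;> by_cases hc : p.1 ∈ C n <;> simp [hb, hc]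
    have hm : MeasurableSet {p : (ℕ → Bool) × (ℕ → Bool) | p.2 n = true} := by
      have : {p : (ℕ → Bool) × (ℕ → Bool) | p.2 n = true} =
          (fun p : (ℕ → Bool) × (ℕ → Bool) => p.2 n) ⁻¹' {true} := by ext p; simp
      rw [this]
      exact ((measurable_pi_apply n).comp measurable_snd) (measurableSet_singleton true)
    rw [he]
    exact (hm.inter ((hCm n).preimage measurable_fst)).union
      (hm.compl.inter ((hCm n).preimage measurable_fst).compl)
  -- main claim: every measurable set of Y is h⁻¹ of a Borel set
  have key : ∀ B : Set Y, MeasurableSet B →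
      ∃ D : Set (ℕ → Bool), MeasurableSet D ∧ h ⁻¹' D = B := by
    intro B hB
    obtain ⟨A, hAm, hAe⟩ := hg' (f ⁻¹' B) (hf hB)
    have img1 : φ '' (f ⁻¹' B) = Set.range φ ∩ Prod.fst ⁻¹' A := by
      ext p
      constructor
      · rintro ⟨x, hx, rfl⟩
        rw [← hAe] at hx
        exact ⟨⟨x, rfl⟩, hx⟩
      · rintro ⟨⟨x, rfl⟩, hp⟩
        have : x ∈ g ⁻¹' A := hp
        rw [hAe] at this
        exact ⟨x, this, rfl⟩
    have img2 : φ '' (f ⁻¹' Bᶜ) = Set.range φ ∩ Prod.fst ⁻¹' Aᶜ := by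
      ext p
      constructor
      · rintro ⟨x, hx, rfl⟩
        refine ⟨⟨x, rfl⟩, ?_⟩
        intro hmem
        have : x ∈ g ⁻¹' A := hmem
        rw [hAe] at this
        exact hx this
      · rintro ⟨⟨x, rfl⟩, hp⟩
        refine ⟨x, ?_, rfl⟩
        intro hmem
        have : x ∈ g ⁻¹' A := by rw [hAe]; exact hmem
        exact hp this
    have e1 : h '' B = Prod.snd '' (φ '' (f ⁻¹' B)) := by
      rw [← Set.image_comp]
      have : (Prod.snd ∘ φ) = h ∘ f := rfl
      rw [this, Set.image_comp, Set.image_preimage_eq B hsurj]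
    have e2 : h '' Bᶜ = Prod.snd '' (φ '' (f ⁻¹' Bᶜ)) := by
      rw [← Set.image_comp]
      have : (Prod.snd ∘ φ) = h ∘ f := rfl
      rw [this, Set.image_comp, Set.image_preimage_eq Bᶜ hsurj]
    have a1 : AnalyticSet (h '' B) := by
      rw [e1, img1]
      exact (analyticSet_inter_measurableSet hrangeA
        (hAm.preimage measurable_fst)).image_of_continuous continuous_snd
    have a2 : AnalyticSet (h '' Bᶜ) := by
      rw [e2, img2]
      exact (analyticSet_inter_measurableSet hrangeA
        (hAm.compl.preimage measurable_fst)).image_of_continuous continuous_snd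
    have hdisj : Disjoint (h '' B) (h '' Bᶜ) :=
      (Set.disjoint_image_iff hinj).2 disjoint_compl_right
    obtain ⟨D, hBD, hDdisj, hDm⟩ := a1.measurablySeparable a2 hdisj
    refine ⟨D, hDm, ?_⟩
    ext y
    constructor
    · intro hy
      by_contra hyB
      exact (Set.disjoint_left.1 hDdisj) (Set.mem_image_of_mem h hyB) hy
    · intro hy
      exact hBD (Set.mem_image_of_mem h hy)
  have heq : ‹MeasurableSpace Y› = MeasurableSpace.comap h inferInstance := by
    refine le_antisymm ?_ hmeas.comap_le
    intro B hB
    obtain ⟨D, hDm, hDe⟩ := key B hB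
    exact ⟨D, hDm, hDe⟩
  rw [heq]
  exact MeasurableSpace.CountablyGenerated.comap h
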